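/- Let G be a connected simple graph on a finite vertex set V and let P : V → Fin k (k ≥ 1) be a surjective map such that each cluster P⁻¹(r) induces a connected subgraph of G. If every cross edge of G with respect to P is a bridge of G, then the quotient graph of G under P is a tree and P has no parallel cross edges (i.e., P is a tree partition of G). -/

import Mathlib

open Matrix

variable {V : Type*}

/-- The set of cross edges of `G` with respect to the partition map `P`:
edges of `G` whose two endpoints lie in different clusters. -/
def crossEdges {k : ℕ} (G : SimpleGraph V) (P : V → Fin k) : Set (Sym2 V) :=
  {e | e ∈ G.edgeSet ∧ ¬ (Sym2.map P e).IsDiag}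

/-- The quotient (reduced) graph of `G` under `P`: vertices are the `k` clusters,
and distinct clusters `r`, `s` are adjacent iff `G` has a cross edge with one
endpoint in cluster `r` and the other in cluster `s`. -/
def quotientGraph {k : ℕ} (G : SimpleGraph V) (P : V → Fin k) : SimpleGraph (Fin k) where
  Adj r s := r ≠ s ∧ ∃ u v, G.Adj u v ∧ P u = r ∧ P v = s
  symm := by
    constructor
    rintro r s ⟨hrs, u, v, huv, hu, hv⟩
    exact ⟨hrs.symm, v, u, huv.symm, hv, hu⟩
  loopless := by
    constructor
    rintro r ⟨hrr, -⟩
    exact hrr rfl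

/-- `P` has no parallel cross edges: distinct cross edges of `G` join distinct
(unordered) pairs of clusters. -/
def NoParallelCrossEdges {k : ℕ} (G : SimpleGraph V) (P : V → Fin k) : Prop :=
  ∀ e₁ ∈ crossEdges G P, ∀ e₂ ∈ crossEdges G P, Sym2.map P e₁ = Sym2.map P e₂ → e₁ = e₂

/-- Vertices in the same cluster are reachable avoiding all cross edges. -/
lemma intra_reachable {k : ℕ} (G : SimpleGraph V) (P : V → Fin k)
    (hcl : ∀ r : Fin k, (G.induce (P ⁻¹' {r})).Connected)
    {u v : V} (h : P u = P v) :
    (G.deleteEdges (crossEdges G P)).Reachable u v := by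
  have hu : u ∈ P ⁻¹' {P u} := rfl
  have hv : v ∈ P ⁻¹' {P u} := by simp [Set.mem_preimage, h.symm]
  have hr := (hcl (P u)).preconnected ⟨u, hu⟩ ⟨v, hv⟩
  have hmap : ∀ a b : (P ⁻¹' {P u} : Set V), (G.induce (P ⁻¹' {P u})).Adj a b →
      (G.deleteEdges (crossEdges G P)).Adj a.val b.val := by
    rintro ⟨a, ha⟩ ⟨b, hb⟩ hab
    simp only [SimpleGraph.comap_adj, Function.Embedding.coe_subtype] at hab
    rw [SimpleGraph.deleteEdges_adj]
    refine ⟨hab, fun hc => ?_⟩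
    have : (Sym2.map P s(a, b)).IsDiag := by
      simp only [Sym2.map_pair_eq, Sym2.isDiag_iff_proj_eq]
      have ha' : P a = P u := ha
      have hb' : P b = P u := hb
      rw [ha', hb']
    exact hc.2 this
  obtain ⟨w⟩ := hr
  exact ⟨(w.map ⟨Subtype.val, fun {a b} h => hmap a b h⟩).copy rfl rfl⟩

lemma mono_del {k : ℕ} (G : SimpleGraph V) (P : V → Fin k) {e : Sym2 V}
    (he : e ∈ crossEdges G P) :
    G.deleteEdges (crossEdges G P) ≤ G.deleteEdges {e} :=
  SimpleGraph.deleteEdges_anti (by simpa using he)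

/-- Lifting reachability in the quotient minus an edge to `G` minus a cross edge. -/
lemma lift_reachable {k : ℕ} (G : SimpleGraph V) (P : V → Fin k)
    (hcl : ∀ r : Fin k, (G.induce (P ⁻¹' {r})).Connected)
    {e : Sym2 V} (he : e ∈ crossEdges G P) {r s : Fin k}
    (h : (((quotientGraph G P).deleteEdges {Sym2.map P e})).Reachable r s) :
    ∀ u v : V, P u = r → P v = s → (G.deleteEdges {e}).Reachable u v := by
  obtain ⟨w⟩ := h
  induction w with
  | nil =>
    intro u v hu hv
    exact ((intra_reachable G P hcl (hu.trans hv.symm)).mono (mono_del G P he))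
  | @cons r t s hadj w ih =>
    intro u v hu hv
    rw [SimpleGraph.deleteEdges_adj] at hadj
    obtain ⟨⟨hne, u', v', huv, hu', hv'⟩, hnotdel⟩ := hadj
    have hcross : s(u', v') ∈ crossEdges G P := by
      refine ⟨huv, ?_⟩
      simp only [Sym2.map_pair_eq, Sym2.isDiag_iff_proj_eq, hu', hv']
      exact hne
    have hne_e : s(u', v') ≠ e := by
      intro hcontra
      apply hnotdel
      rw [← hcontra]
      simp [Sym2.map_pair_eq, hu', hv']
    have h1 : (G.deleteEdges {e}).Reachable u u' :=
      (intra_reachable G P hcl (hu.trans hu'.symm)).mono (mono_del G P he)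
    have h2 : (G.deleteEdges {e}).Adj u' v' := by
      rw [SimpleGraph.deleteEdges_adj]
      exact ⟨huv, by simpa using hne_e⟩
    have h3 : (G.deleteEdges {e}).Reachable v' v := ih v' v hv' hv
    exact h1.trans (h2.reachable.trans h3)

lemma quot_reach {k : ℕ} (G : SimpleGraph V) (P : V → Fin k) {u v : V} (w : G.Walk u v) :
    (quotientGraph G P).Reachable (P u) (P v) := by
  induction w with
  | nil => rfl
  | @cons a b c h w ih =>
    by_cases hP : P a = P b
    · rwa [hP]
    · exact (SimpleGraph.Adj.reachable (show (quotientGraph G P).Adj (P a) (P b) from ⟨hP, a, b, h, rfl, rfl⟩)).trans ih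

theorem bridges_imply_tree_partition [Fintype V] {k : ℕ} (hk : 1 ≤ k)
    (G : SimpleGraph V) (hG : G.Connected) (P : V → Fin k)
    (hsurj : Function.Surjective P)
    (hcl : ∀ r : Fin k, (G.induce (P ⁻¹' {r})).Connected)
    (hbr : ∀ e ∈ crossEdges G P, G.IsBridge e) :
    (quotientGraph G P).IsTree ∧ NoParallelCrossEdges G P := by
  constructor
  · constructor
    · -- connected
      haveI : Nonempty (Fin k) := ⟨⟨0, hk⟩⟩
      refine ⟨?_⟩
      intro r s
      obtain ⟨u, rfl⟩ := hsurj r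
      obtain ⟨v, rfl⟩ := hsurj s
      obtain ⟨w⟩ := hG.preconnected u v
      exact quot_reach G P w
    · -- acyclic
      rw [SimpleGraph.isAcyclic_iff_forall_edge_isBridge]
      intro e'
      induction e' using Sym2.ind with
      | _ r s =>
      intro he'
      rw [SimpleGraph.mem_edgeSet] at he'
      obtain ⟨hne, u, v, huv, hu, hv⟩ := he'
      have hcross : s(u, v) ∈ crossEdges G P := by
        refine ⟨huv, ?_⟩
        simp only [Sym2.map_pair_eq, Sym2.isDiag_iff_proj_eq, hu, hv]
        exact hne
      rw [SimpleGraph.isBridge_iff]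
      intro hreach
      have hmap : Sym2.map P s(u, v) = s(r, s) := by simp [Sym2.map_pair_eq, hu, hv]
      have hreach' : (((quotientGraph G P).deleteEdges {Sym2.map P s(u, v)})).Reachable r s := by
        rw [hmap]; exact hreach
      have := lift_reachable G P hcl hcross hreach' u v hu hv
      have hb := hbr s(u, v) hcross
      rw [SimpleGraph.isBridge_iff] at hb
      exact hb this
  · -- no parallel cross edges
    intro e₁ he₁ e₂ he₂ heq
    by_contra hne
    induction e₁ using Sym2.ind with
    | _ u v =>
    induction e₂ using Sym2.ind with
    | _ u' v' =>
    have hb := hbr s(u, v) he₁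
    rw [SimpleGraph.isBridge_iff] at hb
    apply hb
    have h2adj : G.Adj u' v' := he₂.1
    have hstep : (G.deleteEdges {s(u, v)}).Adj u' v' := by
      rw [SimpleGraph.deleteEdges_adj]
      refine ⟨h2adj, ?_⟩
      simp only [Set.mem_singleton_iff]
      intro hc
      exact hne (hc ▸ rfl)
    simp only [Sym2.map_pair_eq, Sym2.eq_iff] at heq
    rcases heq with ⟨h1, h2⟩ | ⟨h1, h2⟩
    · have ha : (G.deleteEdges {s(u, v)}).Reachable u u' :=
        ((intra_reachable G P hcl h1.symm).mono (mono_del G P he₁)).symm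
      have hb' : (G.deleteEdges {s(u, v)}).Reachable v' v :=
        ((intra_reachable G P hcl h2).mono (mono_del G P he₁)).symm
      exact ha.trans (hstep.reachable.trans hb')
    · have ha : (G.deleteEdges {s(u, v)}).Reachable u v' :=
        ((intra_reachable G P hcl h1.symm).mono (mono_del G P he₁)).symm
      have hb' : (G.deleteEdges {s(u, v)}).Reachable u' v :=
        ((intra_reachable G P hcl h2).mono (mono_del G P he₁)).symm
      exact ha.trans (hstep.symm.reachable.trans hb')
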